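/- Weighted least squares is the best linear unbiased estimator when the variances are known: for every (M+1)×N real matrix A with A V = I_{M+1}, the matrix A Ω Aᵀ − (Vᵀ Ω⁻¹ V)⁻¹ is positive semidefinite. Consequently, in the heteroskedastic linear model y = Vβ + ε with E[ε] = 0 and Cov(ε) = Ω, every linear unbiased estimator β̃ = A y of β has covariance A Ω Aᵀ dominating, in the Loewner order, the covariance (Vᵀ Ω⁻¹ V)⁻¹ of the weighted least squares estimator β̂ = (Vᵀ Ω⁻¹ V)⁻¹ Vᵀ Ω⁻¹ y. -/

import Mathlib

open Matrix

/-- **Weighted least squares is BLUE (Gauss–Markov with known variances)**: for every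
`(M+1)×N` matrix `A` with `A V = I`, the matrix `A Ω Aᵀ − (Vᵀ Ω⁻¹ V)⁻¹` is positive
semidefinite; i.e. every linear unbiased estimator has covariance dominating, in the
Loewner order, the covariance of the weighted least squares estimator. -/
theorem weighted_least_squares_is_BLUE
    {N M : ℕ} (hNM : N > M + 1)
    (V : Matrix (Fin N) (Fin (M + 1)) ℝ) (hrank : V.rank = M + 1)
    (σ2 : Fin N → ℝ) (hσ2 : ∀ i, 0 < σ2 i)
    (W : Matrix (Fin N) (Fin N) ℝ) (hW : W = Matrix.diagonal σ2)
    (A : Matrix (Fin (M + 1)) (Fin N) ℝ) (hA : A * V = 1) :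
    (A * W * Aᵀ - (Vᵀ * W⁻¹ * V)⁻¹).PosSemidef := by
  subst hW
  set Ω := Matrix.diagonal σ2 with hΩ
  have hWpd : Ω.PosDef := posDef_diagonal_iff.mpr hσ2
  have hWinv : Ω⁻¹.PosDef := hWpd.inv
  have hWunit : IsUnit Ω.det := hWpd.det_pos.ne'.isUnit
  have hWl : Ω⁻¹ * Ω = 1 := nonsing_inv_mul _ hWunit
  have hWr : Ω * Ω⁻¹ = 1 := mul_nonsing_inv _ hWunit
  have hWt : Ωᵀ = Ω := by rw [hΩ, diagonal_transpose]
  have hWit : Ω⁻¹ᵀ = Ω⁻¹ := by rw [transpose_nonsing_inv, hWt]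
  have hinj : Function.Injective V.mulVec := by
    rw [← coe_mulVecLin, ← LinearMap.ker_eq_bot]
    have h1 := V.mulVecLin.finrank_range_add_finrank_ker
    rw [show Module.finrank ℝ (LinearMap.range V.mulVecLin) = V.rank from rfl, hrank] at h1
    simp [Module.finrank_pi] at h1
    exact h1
  set S := Vᵀ * Ω⁻¹ * V with hS
  have hSpsd : S.PosSemidef := by
    have := hWinv.posSemidef.conjTranspose_mul_mul_same V
    simpa [conjTranspose_eq_transpose_of_trivial] using this
  have hSpd : S.PosDef := by
    refine PosDef.of_dotProduct_mulVec_pos hSpsd.1 fun x hx => ?_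
    have hVx : V.mulVec x ≠ 0 := fun h => hx (hinj (by simpa using h))
    have h2 := hWinv.dotProduct_mulVec_pos hVx
    simpa [hS, Matrix.mul_assoc, Matrix.mulVec_mulVec, dotProduct_mulVec,
      ← Matrix.vecMul_vecMul, vecMul_transpose, star_trivial] using h2
  have hSt : Sᵀ = S := hSpsd.1
  have hSunit : IsUnit S.det := hSpd.det_pos.ne'.isUnit
  have hSinv : S⁻¹ * S = 1 := nonsing_inv_mul _ hSunit
  have hSit : S⁻¹ᵀ = S⁻¹ := by rw [transpose_nonsing_inv, hSt]
  set B := A - S⁻¹ * Vᵀ * Ω⁻¹ with hB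
  have hAVt : Vᵀ * Aᵀ = 1 := by rw [← transpose_mul, hA, transpose_one]
  have key : A * Ω * Aᵀ - S⁻¹ = B * Ω * Bᵀ := by
    rw [hB]
    simp only [Matrix.sub_mul, Matrix.mul_sub, transpose_sub, transpose_mul,
      transpose_transpose, hWit, hSit, ← Matrix.mul_assoc]
    have e1 : A * Ω * Ω⁻¹ * V * S⁻¹ = S⁻¹ := by
      rw [Matrix.mul_assoc A Ω, hWr, Matrix.mul_one, hA, Matrix.one_mul]
    have e2 : S⁻¹ * Vᵀ * Ω⁻¹ * Ω * Aᵀ = S⁻¹ := by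
      rw [Matrix.mul_assoc _ Ω⁻¹ Ω, hWl, Matrix.mul_one, Matrix.mul_assoc, hAVt,
        Matrix.mul_one]
    have e3 : S⁻¹ * Vᵀ * Ω⁻¹ * Ω * Ω⁻¹ * V * S⁻¹ = S⁻¹ := by
      rw [Matrix.mul_assoc _ Ω⁻¹ Ω, hWl, Matrix.mul_one,
        Matrix.mul_assoc S⁻¹ Vᵀ Ω⁻¹, Matrix.mul_assoc S⁻¹ (Vᵀ * Ω⁻¹) V]
      rw [← hS, hSinv, Matrix.one_mul]
    rw [e1, e2, e3]
    abel
  rw [key]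
  have := hWpd.posSemidef.mul_mul_conjTranspose_same B
  simpa [conjTranspose_eq_transpose_of_trivial] using this
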